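/- Let m ≥ 1 and let h₁,…,h_m be nonzero integers. Then the Shannon entropy of h₁X₁+⋯+h_mX_m satisfies H(h₁X₁+⋯+h_mX_m) ≥ H_m, i.e., −Σ_{z∈ℤ} p(z)·log₂ p(z) ≥ H_m where p(z) = 2^{-m}·|{(ε₁,…,ε_m) ∈ {0,1}^m : ε₁h₁+⋯+ε_mh_m = z}|; equality holds if and only if |h₁| = |h₂| = ⋯ = |h_m|. -/

import Mathlib

open scoped BigOperators

/-- `H_m`: the Shannon entropy of the symmetric binomial distribution `B(m,1/2)`. -/
noncomputable def Hm (m : ℕ) : ℝ :=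
  -∑ j ∈ Finset.range (m + 1),
    ((m.choose j : ℝ) / 2 ^ m) * Real.logb 2 ((m.choose j : ℝ) / 2 ^ m)

/-- Probability mass function of `h₁X₁+⋯+h_mX_m`, where `X₁,…,X_m` are independent and
uniform on `{0,1}`: `p_X(z) = 2^{-m}·|{ε ∈ {0,1}^m : ε₁h₁+⋯+ε_mh_m = z}|`. -/
noncomputable def pX {m : ℕ} (h : Fin m → ℤ) (z : ℤ) : ℝ :=
  ((Finset.univ.filter fun ε : Fin m → Bool =>
      (∑ i ∈ Finset.univ.filter (fun i => ε i = true), h i) = z).card : ℝ) / 2 ^ m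

/-- Shannon entropy of `h₁X₁+⋯+h_mX_m` (with `0·log₂ 0` interpreted as `0`). -/
noncomputable def entX {m : ℕ} (h : Fin m → ℤ) : ℝ :=
  -∑' z : ℤ, pX h z * Real.logb 2 (pX h z)

namespace ELO
open Finset Real

variable {m : ℕ}

def sumw (h : Fin m → ℤ) (ε : Fin m → Bool) : ℤ :=
  ∑ i ∈ Finset.univ.filter (fun i => ε i = true), h i

def Nc (h : Fin m → ℤ) (z : ℤ) : ℕ :=
  (Finset.univ.filter fun ε : Fin m → Bool => sumw h ε = z).card

def SS (h : Fin m → ℤ) : Finset ℤ := Finset.image (sumw h) Finset.univ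

def tset (ε : Fin m → Bool) : Finset (Fin m) := Finset.univ.filter (fun i => ε i = true)

lemma pX_eq (h : Fin m → ℤ) (z : ℤ) : pX h z = (Nc h z : ℝ) / 2 ^ m := rfl

lemma Nc_eq_zero {h : Fin m → ℤ} {z : ℤ} (hz : z ∉ SS h) : Nc h z = 0 := by
  rw [Nc, Finset.card_eq_zero, Finset.filter_eq_empty_iff]
  intro ε _ hs
  exact hz (Finset.mem_image.2 ⟨ε, Finset.mem_univ _, hs⟩)

lemma Nc_pos {h : Fin m → ℤ} {z : ℤ} (hz : z ∈ SS h) : 0 < Nc h z := by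
  rw [Nc, Finset.card_pos]
  obtain ⟨ε, _, hs⟩ := Finset.mem_image.1 hz
  exact ⟨ε, Finset.mem_filter.2 ⟨Finset.mem_univ _, hs⟩⟩

lemma sum_Nc (h : Fin m → ℤ) : ∑ z ∈ SS h, Nc h z = 2 ^ m := by
  classical
  have := Finset.card_eq_sum_card_fiberwise
    (f := sumw h) (s := (Finset.univ : Finset (Fin m → Bool))) (t := SS h)
    (fun x _ => Finset.mem_image.2 ⟨x, Finset.mem_univ _, rfl⟩)
  unfold Nc
  rw [← this]
  simp [Finset.card_univ]

lemma logb_two_pow (m : ℕ) : Real.logb 2 ((2:ℝ) ^ m) = m := by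
  rw [Real.logb_pow, Real.logb_self_eq_one (by norm_num)]
  ring

lemma entX_eq (h : Fin m → ℤ) :
    entX h = m - (∑ z ∈ SS h, (Nc h z : ℝ) * Real.logb 2 (Nc h z)) / 2 ^ m := by
  classical
  have hsupp : ∀ z ∉ SS h, pX h z * Real.logb 2 (pX h z) = 0 := by
    intro z hz
    rw [pX_eq]
    have : Nc h z = 0 := Nc_eq_zero hz
    rw [this]
    simp
  rw [entX, tsum_eq_sum hsupp]
  have h2 : ((2:ℝ) ^ m) ≠ 0 := by positivity
  have hterm : ∀ z ∈ SS h, pX h z * Real.logb 2 (pX h z) =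
      ((Nc h z : ℝ) * Real.logb 2 (Nc h z)) / 2 ^ m - m * ((Nc h z : ℝ) / 2 ^ m) := by
    intro z hz
    have hN : ((Nc h z : ℝ)) ≠ 0 := by
      have := Nc_pos hz
      positivity
    rw [pX_eq, Real.logb_div hN h2, logb_two_pow]
    ring
  rw [Finset.sum_congr rfl hterm, Finset.sum_sub_distrib, ← Finset.sum_div, ← Finset.mul_sum,
    ← Finset.sum_div]
  have hcast : (∑ z ∈ SS h, (Nc h z : ℝ)) = 2 ^ m := by
    rw [← Nat.cast_sum, sum_Nc]
    norm_num
  rw [hcast]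
  field_simp
  ring

lemma Hm_eq (m : ℕ) :
    Hm m = m -
      (∑ j ∈ Finset.range (m + 1), (m.choose j : ℝ) * Real.logb 2 (m.choose j)) / 2 ^ m := by
  have h2 : ((2:ℝ) ^ m) ≠ 0 := by positivity
  have hterm : ∀ j ∈ Finset.range (m + 1),
      ((m.choose j : ℝ) / 2 ^ m) * Real.logb 2 ((m.choose j : ℝ) / 2 ^ m) =
      ((m.choose j : ℝ) * Real.logb 2 (m.choose j)) / 2 ^ m - m * ((m.choose j : ℝ) / 2 ^ m) := by
    intro j hj
    have hc : (m.choose j : ℝ) ≠ 0 := by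
      have := Nat.choose_pos (Nat.lt_succ_iff.1 (Finset.mem_range.1 hj))
      positivity
    rw [Real.logb_div hc h2, logb_two_pow]
    ring
  rw [Hm, Finset.sum_congr rfl hterm, Finset.sum_sub_distrib, ← Finset.sum_div, ← Finset.mul_sum,
    ← Finset.sum_div]
  have hcast : (∑ j ∈ Finset.range (m + 1), (m.choose j : ℝ)) = 2 ^ m := by
    rw [← Nat.cast_sum, Nat.sum_range_choose]
    norm_num
  rw [hcast]
  field_simp
  ring

lemma sumw_abs (h : Fin m → ℤ) (ε : Fin m → Bool) :
    sumw (fun i => |h i|) (fun i => xor (ε i) (decide (h i < 0))) =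
      sumw h ε - ∑ i ∈ Finset.univ.filter (fun i => h i < 0), h i := by
  classical
  unfold sumw
  rw [Finset.sum_filter, Finset.sum_filter, Finset.sum_filter, ← Finset.sum_sub_distrib]
  refine Finset.sum_congr rfl fun i _ => ?_
  by_cases hneg : h i < 0 <;> by_cases hi : ε i = true <;>
    simp [hneg, hi, abs_of_neg, abs_of_nonneg, le_of_not_gt]

lemma Nc_abs (h : Fin m → ℤ) (z : ℤ) :
    Nc h z = Nc (fun i => |h i|) (z - ∑ i ∈ Finset.univ.filter (fun i => h i < 0), h i) := by
  classical
  set c := ∑ i ∈ Finset.univ.filter (fun i => h i < 0), h i with hc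
  unfold Nc
  refine Finset.card_bij' (fun ε _ => fun i => xor (ε i) (decide (h i < 0)))
    (fun ε _ => fun i => xor (ε i) (decide (h i < 0))) ?_ ?_ ?_ ?_
  · intro ε hε
    rw [Finset.mem_filter] at hε ⊢
    refine ⟨Finset.mem_univ _, ?_⟩
    rw [sumw_abs, hε.2]
  · intro ε hε
    rw [Finset.mem_filter] at hε ⊢
    refine ⟨Finset.mem_univ _, ?_⟩
    have := sumw_abs h (fun i => xor (ε i) (decide (h i < 0)))
    have hxx : (fun i => xor (xor (ε i) (decide (h i < 0))) (decide (h i < 0))) = ε := by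
      funext i
      cases hhh : decide (h i < 0) <;> simp [hhh]
    rw [hxx] at this
    show sumw h (fun i => xor (ε i) (decide (h i < 0))) = z
    have h2 := hε.2
    rw [← hc] at this
    linarith
  · intro ε _
    funext i
    cases hhh : decide (h i < 0) <;> simp [hhh]
  · intro ε _
    funext i
    cases hhh : decide (h i < 0) <;> simp [hhh]

lemma entX_abs (h : Fin m → ℤ) : entX h = entX (fun i => |h i|) := by
  classical
  set c := ∑ i ∈ Finset.univ.filter (fun i => h i < 0), h i with hc
  have hpt : ∀ z, pX h z = pX (fun i => |h i|) (z - c) := by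
    intro z
    rw [pX_eq, pX_eq, Nc_abs]
  rw [entX, entX]
  congr 1
  have := (Equiv.subRight c).tsum_eq
    (fun z => pX (fun i => |h i|) z * Real.logb 2 (pX (fun i => |h i|) z))
  rw [← this]
  exact tsum_congr fun z => by rw [hpt z]; rfl

lemma mem_tset {ε : Fin m → Bool} {i : Fin m} : i ∈ tset ε ↔ ε i = true := by
  simp [tset]

lemma tset_inj : Function.Injective (tset (m := m)) := by
  intro a b hab
  funext i
  have : i ∈ tset a ↔ i ∈ tset b := by rw [hab]
  rw [mem_tset, mem_tset] at this
  cases ha : a i <;> cases hb : b i <;> simp [ha, hb] at this ⊢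

lemma tset_indicator (s : Finset (Fin m)) : tset (fun i => decide (i ∈ s)) = s := by
  ext i; simp [mem_tset]

lemma sumw_eq_sum_tset (h : Fin m → ℤ) (ε : Fin m → Bool) : sumw h ε = ∑ i ∈ tset ε, h i := rfl

lemma sum_mem_SS (h : Fin m → ℤ) (s : Finset (Fin m)) : (∑ i ∈ s, h i) ∈ SS h := by
  refine Finset.mem_image.2 ⟨fun i => decide (i ∈ s), Finset.mem_univ _, ?_⟩
  rw [sumw_eq_sum_tset, tset_indicator]

lemma card_weight (j : ℕ) :
    (Finset.univ.filter fun ε : Fin m → Bool => (tset ε).card = j).card = m.choose j := by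
  classical
  have : (Finset.univ.filter fun ε : Fin m → Bool => (tset ε).card = j).card
      = (Finset.powersetCard j (Finset.univ : Finset (Fin m))).card := by
    refine Finset.card_bij (fun ε _ => tset ε) ?_ ?_ ?_
    · intro ε hε
      rw [Finset.mem_filter] at hε
      exact Finset.mem_powersetCard.2 ⟨Finset.subset_univ _, hε.2⟩
    · intro a _ b _ hab
      exact tset_inj hab
    · intro s hs
      refine ⟨fun i => decide (i ∈ s), Finset.mem_filter.2 ⟨Finset.mem_univ _, ?_⟩, tset_indicator s⟩
      rw [tset_indicator]
      exact (Finset.mem_powersetCard.1 hs).2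
  rw [this, Finset.card_powersetCard, Finset.card_univ, Fintype.card_fin]

lemma const_case (h : Fin m → ℤ) (d : ℤ) (hd : 0 < d) (hc : ∀ i, h i = d) (F : ℕ → ℝ) :
    (∑ z ∈ SS h, F (Nc h z)) = ∑ j ∈ Finset.range (m + 1), F (m.choose j) := by
  classical
  have hsumw : ∀ ε : Fin m → Bool, sumw h ε = d * (tset ε).card := by
    intro ε
    rw [sumw_eq_sum_tset]
    rw [Finset.sum_congr rfl (fun i _ => hc i), Finset.sum_const, nsmul_eq_mul, mul_comm]
  have hSS : SS h = Finset.image (fun j : ℕ => d * j) (Finset.range (m + 1)) := by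
    ext z
    constructor
    · intro hz
      obtain ⟨ε, _, hε⟩ := Finset.mem_image.1 hz
      refine Finset.mem_image.2 ⟨(tset ε).card, Finset.mem_range.2 ?_, by rw [← hsumw, hε]⟩
      have := Finset.card_le_card (Finset.subset_univ (tset ε))
      rw [Finset.card_univ, Fintype.card_fin] at this
      omega
    · intro hz
      obtain ⟨j, hj, hjz⟩ := Finset.mem_image.1 hz
      rw [Finset.mem_range] at hj
      obtain ⟨s, hs⟩ : ∃ s : Finset (Fin m), s.card = j := by
        refine ⟨Finset.univ.filter (fun i : Fin m => (i : ℕ) < j), ?_⟩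
        have : (Finset.univ.filter (fun i : Fin m => (i : ℕ) < j)).card = (Finset.range j).card := by
          refine Finset.card_bij (fun i _ => (i : ℕ)) ?_ ?_ ?_
          · intro a ha; exact Finset.mem_range.2 (Finset.mem_filter.1 ha).2
          · intro a _ b _ hab; exact Fin.val_injective hab
          · intro b hb
            have hbm : b < m := lt_of_lt_of_le (Finset.mem_range.1 hb) (Nat.lt_succ_iff.1 hj)
            exact ⟨⟨b, hbm⟩, Finset.mem_filter.2 ⟨Finset.mem_univ _, Finset.mem_range.1 hb⟩, rfl⟩
        rw [this, Finset.card_range]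
      have := sum_mem_SS h s
      rw [Finset.sum_congr rfl (fun i _ => hc i), Finset.sum_const, hs, nsmul_eq_mul, mul_comm] at this
      rw [← hjz]
      exact this
  have hNc : ∀ j ∈ Finset.range (m + 1), Nc h (d * j) = m.choose j := by
    intro j hj
    have : (Finset.univ.filter fun ε : Fin m → Bool => sumw h ε = d * j)
        = (Finset.univ.filter fun ε : Fin m → Bool => (tset ε).card = j) := by
      refine Finset.filter_congr fun ε _ => ?_
      rw [hsumw]
      constructor
      · intro he
        have := mul_left_cancel₀ (ne_of_gt hd) he
        exact_mod_cast this
      · intro he; rw [he]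
    rw [Nc, this, card_weight]
  rw [hSS, Finset.sum_image (by intro a _ b _ hab; exact_mod_cast mul_left_cancel₀ (ne_of_gt hd) hab)]
  refine Finset.sum_congr rfl fun j hj => ?_
  rw [hNc j hj]

section sorted
variable (h : Fin m → ℤ)

/-- prefix sums of the sorted tuple -/
noncomputable def pfx (k : ℕ) : ℤ :=
  ∑ j ∈ Finset.univ.filter (fun j : Fin m => (j : ℕ) < k), h (Tuple.sort h j)

lemma pfx_mem (k : ℕ) : pfx h k ∈ SS h := by
  classical
  have : pfx h k = ∑ i ∈ (Finset.univ.filter (fun j : Fin m => (j : ℕ) < k)).image (Tuple.sort h),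
      h i := by
    rw [Finset.sum_image (fun a _ b _ hab => (Tuple.sort h).injective hab)]
    rfl
  rw [this]
  exact sum_mem_SS h _

lemma pfx_step {k : ℕ} (hk : k < m) : pfx h (k + 1) = pfx h k + h (Tuple.sort h ⟨k, hk⟩) := by
  classical
  have : Finset.univ.filter (fun j : Fin m => (j : ℕ) < k + 1)
      = insert ⟨k, hk⟩ (Finset.univ.filter (fun j : Fin m => (j : ℕ) < k)) := by
    ext j
    simp only [Finset.mem_filter, Finset.mem_insert, Finset.mem_univ, true_and]
    constructor
    · intro hj
      rcases Nat.lt_succ_iff_lt_or_eq.1 hj with hj' | hj'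
      · exact Or.inr hj'
      · exact Or.inl (Fin.ext hj')
    · rintro (rfl | hj)
      · exact Nat.lt_succ_self k
      · exact Nat.lt_succ_of_lt hj
  rw [pfx, this, Finset.sum_insert (by simp)]
  rw [pfx]
  ring

variable (hp : ∀ i, 0 < h i)
include hp

lemma pfx_lt {k l : ℕ} (hkl : k < l) (hl : l ≤ m) : pfx h k < pfx h l := by
  classical
  have hkm : k < m := lt_of_lt_of_le hkl hl
  refine Finset.sum_lt_sum_of_subset ?_ (i := ⟨k, hkm⟩) ?_ ?_ ?_ ?_
  · intro j hj
    rw [Finset.mem_filter] at hj ⊢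
    exact ⟨hj.1, lt_of_lt_of_le hj.2 (le_of_lt hkl)⟩
  · exact Finset.mem_filter.2 ⟨Finset.mem_univ _, hkl⟩
  · simp
  · exact hp _
  · intro j _ _; exact le_of_lt (hp _)

lemma pfx_le {k l : ℕ} (hkl : k ≤ l) (hl : l ≤ m) : pfx h k ≤ pfx h l := by
  rcases eq_or_lt_of_le hkl with rfl | hlt
  · exact le_refl _
  · exact le_of_lt (pfx_lt h hp hlt hl)

lemma card_SS_ge : m + 1 ≤ (SS h).card := by
  classical
  have hsub : (Finset.range (m + 1)).image (pfx h) ⊆ SS h := by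
    intro z hz
    obtain ⟨k, _, rfl⟩ := Finset.mem_image.1 hz
    exact pfx_mem h k
  have hcard : ((Finset.range (m + 1)).image (pfx h)).card = m + 1 := by
    rw [Finset.card_image_of_injOn, Finset.card_range]
    intro a ha b hb hab
    rw [Finset.mem_coe, Finset.mem_range] at ha hb
    by_contra hne
    rcases lt_or_gt_of_ne hne with hlt | hlt
    · exact absurd hab (ne_of_lt (pfx_lt h hp hlt (by omega)))
    · exact absurd hab.symm (ne_of_lt (pfx_lt h hp hlt (by omega)))
  calc m + 1 = ((Finset.range (m + 1)).image (pfx h)).card := hcard.symm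
    _ ≤ (SS h).card := Finset.card_le_card hsub


lemma card_SS_big (hne : ¬ ∀ i j, h i = h j) : m + 2 ≤ (SS h).card := by
  classical
  set g : Fin m → ℤ := h ∘ Tuple.sort h with hg
  have hmono : Monotone g := Tuple.monotone_sort h
  -- find a consecutive strict increase
  have hconsec : ∃ k : ℕ, ∃ hk : k + 1 < m, g ⟨k, by omega⟩ < g ⟨k + 1, hk⟩ := by
    by_contra hcon
    push_neg at hcon
    have hflat : ∀ n (hn : n < m), g ⟨n, hn⟩ = g ⟨0, by omega⟩ := by
      intro n
      induction n with
      | zero => intro _; rfl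
      | succ n ih =>
        intro hn
        have hn' : n < m := by omega
        have h1 : g ⟨n, hn'⟩ ≤ g ⟨n + 1, hn⟩ := hmono (by simp [Fin.le_def])
        have h2 := hcon n hn
        have : g ⟨n + 1, hn⟩ = g ⟨n, hn'⟩ := le_antisymm h2 h1
        rw [this, ih hn']
    apply hne
    intro i j
    have hi : h i = g ((Tuple.sort h).symm i) := by simp [hg]
    have hj : h j = g ((Tuple.sort h).symm j) := by simp [hg]
    rw [hi, hj, hflat _ (Fin.is_lt _), hflat _ (Fin.is_lt _)]
  obtain ⟨k, hk, hlt⟩ := hconsec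
  -- the extra element
  set q : ℤ := pfx h k + g ⟨k + 1, hk⟩ with hq
  have hqmem : q ∈ SS h := by
    have hdisj : Tuple.sort h ⟨k + 1, hk⟩ ∉
        (Finset.univ.filter (fun j : Fin m => (j : ℕ) < k)).image (Tuple.sort h) := by
      intro hmem
      obtain ⟨j, hj, hj2⟩ := Finset.mem_image.1 hmem
      have := (Tuple.sort h).injective hj2
      rw [this] at hj
      simp at hj
    have : q = ∑ i ∈ insert (Tuple.sort h ⟨k + 1, hk⟩)
        ((Finset.univ.filter (fun j : Fin m => (j : ℕ) < k)).image (Tuple.sort h)), h i := by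
      rw [Finset.sum_insert hdisj,
        Finset.sum_image (fun a _ b _ hab => (Tuple.sort h).injective hab)]
      rw [hq, pfx]
      simp [hg]
      ring
    rw [this]
    exact sum_mem_SS h _
  have hq1 : pfx h (k + 1) < q := by
    rw [hq, pfx_step h (by omega : k < m)]
    exact (add_lt_add_iff_left _).2 hlt
  have hq2 : q < pfx h (k + 2) := by
    rw [hq, pfx_step h (by omega : k + 1 < m), pfx_step h (by omega : k < m)]
    have h0 : (0:ℤ) < g ⟨k, by omega⟩ := hp _
    have : pfx h k + g ⟨k + 1, hk⟩ < (pfx h k + g ⟨k, by omega⟩) + g ⟨k + 1, hk⟩ := by linarith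
    exact this
  have hqnot : q ∉ (Finset.range (m + 1)).image (pfx h) := by
    intro hmem
    obtain ⟨j, hjr, hj⟩ := Finset.mem_image.1 hmem
    rw [Finset.mem_range] at hjr
    rcases le_or_gt j (k + 1) with hj' | hj'
    · have : pfx h j ≤ pfx h (k + 1) := pfx_le h hp hj' (by omega)
      omega
    · have : pfx h (k + 2) ≤ pfx h j := pfx_le h hp (by omega) (by omega)
      omega
  have hsub : insert q ((Finset.range (m + 1)).image (pfx h)) ⊆ SS h := by
    intro z hz
    rcases Finset.mem_insert.1 hz with rfl | hz
    · exact hqmem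
    · obtain ⟨j, _, rfl⟩ := Finset.mem_image.1 hz
      exact pfx_mem h j
  have hcard : ((Finset.range (m + 1)).image (pfx h)).card = m + 1 := by
    rw [Finset.card_image_of_injOn, Finset.card_range]
    intro a ha b hb hab
    rw [Finset.mem_coe, Finset.mem_range] at ha hb
    by_contra hne2
    rcases lt_or_gt_of_ne hne2 with hlt2 | hlt2
    · exact absurd hab (ne_of_lt (pfx_lt h hp hlt2 (by omega)))
    · exact absurd hab.symm (ne_of_lt (pfx_lt h hp hlt2 (by omega)))
  calc m + 2 = (insert q ((Finset.range (m + 1)).image (pfx h))).card := by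
        rw [Finset.card_insert_of_notMem hqnot, hcard]
    _ ≤ (SS h).card := Finset.card_le_card hsub

end sorted

lemma tangent_ineq {a t : ℝ} (ha : 1 ≤ a) (ht : 0 ≤ t) :
    t * Real.log a + t - a ≤ t * Real.log t ∧ (t ≠ a → t * Real.log a + t - a < t * Real.log t) := by
  have ha0 : (0:ℝ) < a := lt_of_lt_of_le one_pos ha
  rcases eq_or_lt_of_le ht with rfl | ht'
  · constructor
    · simp; linarith
    · intro _; simp; linarith
  · have hdiv : (0:ℝ) < a / t := div_pos ha0 ht'
    have hlog : Real.log (a / t) = Real.log a - Real.log t := Real.log_div (ne_of_gt ha0) (ne_of_gt ht')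
    have hfield : t * (a / t - 1) = a - t := by field_simp
    constructor
    · have := Real.log_le_sub_one_of_pos hdiv
      rw [hlog] at this
      have h2 := mul_le_mul_of_nonneg_left this (le_of_lt ht')
      rw [hfield] at h2
      linarith
    · intro hne
      have hne' : a / t ≠ 1 := by
        intro hcon
        apply hne
        field_simp at hcon
        exact hcon.symm
      have := Real.log_lt_sub_one_of_pos hdiv hne'
      rw [hlog] at this
      have h2 := mul_lt_mul_of_pos_left this ht'
      rw [hfield] at h2
      linarith

lemma hlp (n : ℕ) (a b : ℕ → ℝ)
    (ha1 : ∀ i, i < n → 1 ≤ a i)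
    (hamono : ∀ i j, i ≤ j → j < n → a j ≤ a i)
    (hb0 : ∀ i, i < n → 0 ≤ b i)
    (hpre : ∀ k, k ≤ n → ∑ i ∈ Finset.range k, a i ≤ ∑ i ∈ Finset.range k, b i)
    (htot : ∑ i ∈ Finset.range n, a i = ∑ i ∈ Finset.range n, b i) :
    (∑ i ∈ Finset.range n, a i * Real.log (a i)) ≤ (∑ i ∈ Finset.range n, b i * Real.log (b i)) ∧
    ((∑ i ∈ Finset.range n, a i * Real.log (a i)) = (∑ i ∈ Finset.range n, b i * Real.log (b i)) →
      ∀ i, i < n → a i = b i) := by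
  classical
  set c : ℕ → ℝ := fun i => Real.log (a i) + 1 with hc
  set d : ℕ → ℝ := fun i => b i - a i with hd
  set g : ℕ → ℝ := fun i => b i * Real.log (b i) - (b i * Real.log (a i) + b i - a i) with hgdef
  have hgnn : ∀ i, i < n → 0 ≤ g i := by
    intro i hi
    have := (tangent_ineq (ha1 i hi) (hb0 i hi)).1
    simp only [hgdef]
    linarith
  have hgpos : ∀ i, i < n → b i ≠ a i → 0 < g i := by
    intro i hi hne
    have := (tangent_ineq (ha1 i hi) (hb0 i hi)).2 hne
    simp only [hgdef]
    linarith
  -- Abel part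
  have habel : 0 ≤ ∑ i ∈ Finset.range n, c i * d i := by
    have hD : ∀ k, k ≤ n → 0 ≤ ∑ j ∈ Finset.range k, d j := by
      intro k hk
      have := hpre k hk
      simp only [hd, Finset.sum_sub_distrib]
      linarith
    have hDn : ∑ j ∈ Finset.range n, d j = 0 := by
      simp only [hd, Finset.sum_sub_distrib]
      linarith
    have hparts := Finset.sum_range_by_parts (M := ℝ) c d n
    simp only [smul_eq_mul] at hparts
    rw [hparts, hDn, mul_zero]
    have : ∀ i ∈ Finset.range (n - 1), 0 ≤ -((c (i + 1) - c i) * ∑ j ∈ Finset.range (i + 1), d j) := by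
      intro i hi
      rw [Finset.mem_range] at hi
      have hcmono : c (i + 1) ≤ c i := by
        have := hamono i (i + 1) (Nat.le_succ _) (by omega)
        have hpos : (0:ℝ) < a (i + 1) := lt_of_lt_of_le one_pos (ha1 _ (by omega))
        simp only [hc]
        have := Real.log_le_log (by linarith) this
        linarith [Real.log_le_log hpos (hamono i (i+1) (Nat.le_succ _) (by omega))]
      have hDi := hD (i + 1) (by omega)
      have : (c (i + 1) - c i) * ∑ j ∈ Finset.range (i + 1), d j ≤ 0 :=
        mul_nonpos_of_nonpos_of_nonneg (by linarith) hDi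
      linarith
    have hsum := Finset.sum_nonneg (fun i hi => this i hi)
    rw [Finset.sum_neg_distrib] at hsum
    linarith
  -- decomposition
  have hdecomp : (∑ i ∈ Finset.range n, b i * Real.log (b i)) - (∑ i ∈ Finset.range n, a i * Real.log (a i))
      = (∑ i ∈ Finset.range n, g i) + ∑ i ∈ Finset.range n, c i * d i := by
    rw [← Finset.sum_add_distrib, ← Finset.sum_sub_distrib]
    refine Finset.sum_congr rfl fun i _ => ?_
    simp only [hgdef, hc, hd]
    ring
  have hgsum : 0 ≤ ∑ i ∈ Finset.range n, g i := Finset.sum_nonneg fun i hi => hgnn i (Finset.mem_range.1 hi)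
  constructor
  · linarith
  · intro heq
    have hzero : ∑ i ∈ Finset.range n, g i = 0 := by linarith
    have hall := (Finset.sum_eq_zero_iff_of_nonneg (fun i hi => hgnn i (Finset.mem_range.1 hi))).1 hzero
    intro i hi
    by_contra hne
    have := hgpos i hi (fun hcon => hne hcon.symm)
    have := hall i (Finset.mem_range.2 hi)
    linarith

/-- fibers as set families -/
def Amap (h : Fin m → ℤ) (z : ℤ) : Finset (Finset (Fin m)) :=
  (Finset.univ.filter fun ε : Fin m → Bool => sumw h ε = z).image tset

lemma card_Amap (h : Fin m → ℤ) (z : ℤ) : (Amap h z).card = Nc h z :=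
  Finset.card_image_of_injective _ tset_inj

lemma sum_mem_Amap {h : Fin m → ℤ} {z : ℤ} {s : Finset (Fin m)} (hs : s ∈ Amap h z) :
    (∑ i ∈ s, h i) = z := by
  obtain ⟨ε, hε, rfl⟩ := Finset.mem_image.1 hs
  rw [← sumw_eq_sum_tset]
  exact (Finset.mem_filter.1 hε).2

lemma antichain_Amap (h : Fin m → ℤ) (hp : ∀ i, 0 < h i) (z : ℤ) :
    IsAntichain (· ⊆ ·) ((Amap h z : Finset (Finset (Fin m))) : Set (Finset (Fin m))) := by
  intro s hs t ht hne hsub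
  have hs' : (∑ i ∈ s, h i) = z := sum_mem_Amap (by exact_mod_cast hs)
  have ht' : (∑ i ∈ t, h i) = z := sum_mem_Amap (by exact_mod_cast ht)
  obtain ⟨x, hxt, hxs⟩ := Finset.exists_of_ssubset (lt_of_le_of_ne hsub hne)
  have : (∑ i ∈ s, h i) < ∑ i ∈ t, h i :=
    Finset.sum_lt_sum_of_subset hsub hxt hxs (hp x) (fun j _ _ => le_of_lt (hp j))
  omega

lemma lym_Amap (h : Fin m → ℤ) (hp : ∀ i, 0 < h i) (z : ℤ) :
    ∑ r ∈ Finset.range (m + 1), (((Amap h z) # r).card : ℝ) / (m.choose r) ≤ 1 := by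
  have := Finset.sum_card_slice_div_choose_le_one (𝕜 := ℝ) (antichain_Amap h hp z)
  simpa [Fintype.card_fin] using this

lemma disj_Amap (h : Fin m → ℤ) {z z' : ℤ} (hne : z ≠ z') : Disjoint (Amap h z) (Amap h z') := by
  rw [Finset.disjoint_left]
  intro s hs hs'
  exact hne ((sum_mem_Amap hs).symm.trans (sum_mem_Amap hs'))

lemma sum_slices_le (h : Fin m → ℤ) (T : Finset ℤ) (r : ℕ) :
    ∑ z ∈ T, ((Amap h z) # r).card ≤ m.choose r := by
  classical
  have hdisj : ∀ z ∈ T, ∀ z' ∈ T, z ≠ z' → Disjoint ((Amap h z) # r) ((Amap h z') # r) := by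
    intro z _ z' _ hne
    exact Finset.disjoint_of_subset_left (Finset.slice_subset)
      (Finset.disjoint_of_subset_right (Finset.slice_subset) (disj_Amap h hne))
  rw [← Finset.card_biUnion hdisj]
  have hsub : T.biUnion (fun z => (Amap h z) # r) ⊆ Finset.powersetCard r Finset.univ := by
    intro s hs
    obtain ⟨z, _, hz⟩ := Finset.mem_biUnion.1 hs
    exact Finset.mem_powersetCard.2 ⟨Finset.subset_univ _, (Finset.mem_slice.1 hz).2⟩
  calc (T.biUnion fun z => (Amap h z) # r).card ≤ _ := Finset.card_le_card hsub
    _ = m.choose r := by rw [Finset.card_powersetCard, Finset.card_univ, Fintype.card_fin]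

lemma sum_slices_eq (h : Fin m → ℤ) (T : Finset ℤ) :
    ∑ r ∈ Finset.range (m + 1), ∑ z ∈ T, ((Amap h z) # r).card = ∑ z ∈ T, Nc h z := by
  rw [Finset.sum_comm]
  refine Finset.sum_congr rfl fun z _ => ?_
  have hIic : Finset.Iic m = Finset.range (m + 1) := by
    ext x; simp [Nat.lt_succ_iff]
  have := Finset.sum_card_slice (Amap h z)
  rw [Fintype.card_fin, hIic] at this
  rw [this, card_Amap]

/-- LP bound : bounded antitone weights, fractional budget `k` -/
lemma lp (N k : ℕ) (b n' : ℕ → ℝ)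
    (hbpos : ∀ i, i < N → 0 < b i)
    (hbanti : ∀ i j, i ≤ j → j < N → b j ≤ b i)
    (hn0 : ∀ i, i < N → 0 ≤ n' i) (hnb : ∀ i, i < N → n' i ≤ b i)
    (hsum : ∑ i ∈ Finset.range N, n' i / b i ≤ (k : ℝ)) :
    ∑ i ∈ Finset.range N, n' i ≤ ∑ i ∈ Finset.range (min k N), b i := by
  rcases le_or_gt N k with hNk | hkN
  · rw [min_eq_right hNk]
    exact Finset.sum_le_sum fun i hi => hnb i (Finset.mem_range.1 hi)
  · rw [min_eq_left (le_of_lt hkN)]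
    have hbk : 0 < b k := hbpos k hkN
    have hsplit : ∑ i ∈ Finset.range k, n' i + ∑ i ∈ Finset.Ico k N, n' i
        = ∑ i ∈ Finset.range N, n' i := Finset.sum_range_add_sum_Ico _ (le_of_lt hkN)
    have hsplit2 : ∑ i ∈ Finset.range k, (n' i / b i) + ∑ i ∈ Finset.Ico k N, (n' i / b i)
        = ∑ i ∈ Finset.range N, (n' i / b i) := Finset.sum_range_add_sum_Ico _ (le_of_lt hkN)
    have h1 : ∀ i ∈ Finset.range k, n' i - b i ≤ (n' i / b i - 1) * b k := by
      intro i hi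
      rw [Finset.mem_range] at hi
      have hbi : 0 < b i := hbpos i (lt_trans hi hkN)
      have hbik : b k ≤ b i := hbanti i k (le_of_lt hi) hkN
      have hr : n' i / b i - 1 ≤ 0 := by
        rw [sub_nonpos, div_le_one hbi]
        exact hnb i (lt_trans hi hkN)
      have : (n' i / b i - 1) * b i ≤ (n' i / b i - 1) * b k := by
        rcases eq_or_lt_of_le hr with hr' | hr'
        · rw [hr']; ring_nf; exact le_refl _
        · exact (mul_le_mul_left_of_neg hr').2 hbik
      calc n' i - b i = (n' i / b i - 1) * b i := by field_simp
        _ ≤ (n' i / b i - 1) * b k := this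
    have h2 : ∀ i ∈ Finset.Ico k N, n' i ≤ (n' i / b i) * b k := by
      intro i hi
      rw [Finset.mem_Ico] at hi
      have hbi : 0 < b i := hbpos i hi.2
      have hbik : b i ≤ b k := hbanti k i hi.1 hi.2
      have hr : 0 ≤ n' i / b i := div_nonneg (hn0 i hi.2) (le_of_lt hbi)
      calc n' i = (n' i / b i) * b i := by field_simp
        _ ≤ (n' i / b i) * b k := mul_le_mul_of_nonneg_left hbik hr
    have key : ∑ i ∈ Finset.range N, n' i - ∑ i ∈ Finset.range k, b i ≤
        b k * (∑ i ∈ Finset.range N, n' i / b i - k) := by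
      have e1 : ∑ i ∈ Finset.range N, n' i - ∑ i ∈ Finset.range k, b i
          = (∑ i ∈ Finset.range k, (n' i - b i)) + ∑ i ∈ Finset.Ico k N, n' i := by
        rw [Finset.sum_sub_distrib]
        linarith [hsplit]
      have e2 : (∑ i ∈ Finset.range k, (n' i - b i)) + ∑ i ∈ Finset.Ico k N, n' i
          ≤ (∑ i ∈ Finset.range k, (n' i / b i - 1) * b k) + ∑ i ∈ Finset.Ico k N, (n' i / b i) * b k := by
        gcongr with i hi i hi
        · exact h1 i hi
        · exact h2 i hi
      have e3 : (∑ i ∈ Finset.range k, (n' i / b i - 1) * b k) + ∑ i ∈ Finset.Ico k N, (n' i / b i) * b k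
          = b k * (∑ i ∈ Finset.range N, n' i / b i - k) := by
        rw [← Finset.sum_mul, ← Finset.sum_mul, ← add_mul]
        rw [Finset.sum_sub_distrib, Finset.sum_const, Finset.card_range]
        rw [← hsplit2]
        push_cast
        ring
      linarith
    have : b k * (∑ i ∈ Finset.range N, n' i / b i - k) ≤ 0 :=
      mul_nonpos_of_nonneg_of_nonpos (le_of_lt hbk) (by linarith)
    linarith


noncomputable def bperm (m : ℕ) : Equiv.Perm (Fin (m + 1)) :=
  Tuple.sort (fun l : Fin (m + 1) => -((m.choose l : ℝ)))

noncomputable def bs (m : ℕ) : ℕ → ℝ :=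
  fun i => if hi : i < m + 1 then ((m.choose (bperm m ⟨i, hi⟩) : ℕ) : ℝ) else 0

lemma bs_pos {i : ℕ} (hi : i < m + 1) : 0 < bs m i := by
  rw [bs, dif_pos hi]
  exact_mod_cast Nat.choose_pos (Fin.is_le _)

lemma bs_nonneg (i : ℕ) : 0 ≤ bs m i := by
  rcases lt_or_ge i (m + 1) with hi | hi
  · exact le_of_lt (bs_pos hi)
  · rw [bs, dif_neg (not_lt.2 hi)]

lemma bs_zero {i : ℕ} (hi : m + 1 ≤ i) : bs m i = 0 := by
  rw [bs, dif_neg (not_lt.2 hi)]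

lemma bs_anti : ∀ i j : ℕ, i ≤ j → bs m j ≤ bs m i := by
  intro i j hij
  rcases lt_or_ge j (m + 1) with hj | hj
  · have hi : i < m + 1 := lt_of_le_of_lt hij hj
    simp only [bs]
    rw [dif_pos hj, dif_pos hi]
    have hmono : Monotone ((fun l : Fin (m + 1) => -((m.choose l : ℝ))) ∘ (bperm m)) := by
      rw [bperm]; exact Tuple.monotone_sort _
    have := hmono (show (⟨i, hi⟩ : Fin (m + 1)) ≤ ⟨j, hj⟩ from hij)
    simp only [Function.comp_apply, neg_le_neg_iff] at this
    exact_mod_cast this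
  · rw [bs_zero hj]
    exact bs_nonneg i

/-- reindexing sums over the sorting permutation -/
lemma reindex (W V : ℕ → ℝ)
    (hV : ∀ i (hi : i < m + 1), V i = W ((bperm m ⟨i, hi⟩ : Fin (m + 1)) : ℕ)) :
    ∑ i ∈ Finset.range (m + 1), V i = ∑ r ∈ Finset.range (m + 1), W r := by
  rw [← Fin.sum_univ_eq_sum_range V (m + 1), ← Fin.sum_univ_eq_sum_range W (m + 1)]
  have h1 : ∀ i : Fin (m + 1), V (i : ℕ) = W ((bperm m i : Fin (m + 1)) : ℕ) := by
    intro i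
    rw [hV i i.isLt]
  calc ∑ i : Fin (m + 1), V (i : ℕ)
      = ∑ i : Fin (m + 1), W ((bperm m i : Fin (m + 1)) : ℕ) :=
        Finset.sum_congr rfl (fun i _ => h1 i)
    _ = ∑ l : Fin (m + 1), W (l : ℕ) := Equiv.sum_comp (bperm m) (fun l : Fin (m + 1) => W (l : ℕ))

lemma fin_filter_card {n k : ℕ} (hk : k ≤ n) :
    ((Finset.univ : Finset (Fin n)).filter (fun i : Fin n => (i : ℕ) < k)).card = k := by
  have : ((Finset.univ : Finset (Fin n)).filter (fun i : Fin n => (i : ℕ) < k)).card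
      = (Finset.range k).card := by
    refine Finset.card_bij (fun i _ => (i : ℕ)) ?_ ?_ ?_
    · intro a ha; exact Finset.mem_range.2 (Finset.mem_filter.1 ha).2
    · intro a _ b _ hab; exact Fin.val_injective hab
    · intro b hb
      have hbn : b < n := lt_of_lt_of_le (Finset.mem_range.1 hb) hk
      exact ⟨⟨b, hbn⟩, Finset.mem_filter.2 ⟨Finset.mem_univ _, Finset.mem_range.1 hb⟩, rfl⟩
  rw [this, Finset.card_range]

lemma fin_filter_sum {n k : ℕ} (hk : k ≤ n) (F : Fin n → ℝ) (G : ℕ → ℝ)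
    (hFG : ∀ (i : ℕ) (hi : i < n), G i = F ⟨i, hi⟩) :
    ∑ i ∈ (Finset.univ : Finset (Fin n)).filter (fun i : Fin n => (i : ℕ) < k), F i
      = ∑ i ∈ Finset.range k, G i := by
  refine Finset.sum_bij (fun a _ => (a : ℕ)) ?_ ?_ ?_ ?_
  · intro a ha; exact Finset.mem_range.2 (Finset.mem_filter.1 ha).2
  · intro a _ b _ hab; exact Fin.val_injective hab
  · intro b hb
    have hbn : b < n := lt_of_lt_of_le (Finset.mem_range.1 hb) hk
    exact ⟨⟨b, hbn⟩, Finset.mem_filter.2 ⟨Finset.mem_univ _, Finset.mem_range.1 hb⟩, rfl⟩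
  · intro a _
    rw [hFG (a : ℕ) a.isLt]

lemma topk (h : Fin m → ℤ) (hp : ∀ i, 0 < h i) (T : Finset ℤ) :
    ∑ z ∈ T, (Nc h z : ℝ) ≤ ∑ i ∈ Finset.range T.card, bs m i := by
  classical
  set k := T.card with hk
  set nfun : ℕ → ℝ := fun r => ∑ z ∈ T, (((Amap h z) # r).card : ℝ) with hnfun
  set ns : ℕ → ℝ :=
    fun i => if hi : i < m + 1 then nfun ((bperm m ⟨i, hi⟩ : Fin (m + 1)) : ℕ) else 0 with hns
  have h1 : ∑ i ∈ Finset.range (m + 1), ns i = ∑ r ∈ Finset.range (m + 1), nfun r :=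
    reindex nfun ns (fun i hi => by simp only [hns]; rw [dif_pos hi])
  have h2 : ∑ i ∈ Finset.range (m + 1), ns i / bs m i
      = ∑ r ∈ Finset.range (m + 1), nfun r / ((m.choose r : ℕ) : ℝ) :=
    reindex _ _ (fun i hi => by simp only [hns, bs]; rw [dif_pos hi, dif_pos hi])
  have hfrac : ∑ r ∈ Finset.range (m + 1), nfun r / ((m.choose r : ℕ) : ℝ) ≤ (k : ℝ) := by
    have e1 : ∀ r ∈ Finset.range (m + 1),
        nfun r / ((m.choose r : ℕ) : ℝ) = ∑ z ∈ T, (((Amap h z) # r).card : ℝ) / (m.choose r) := by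
      intro r _
      rw [hnfun, Finset.sum_div]
    rw [Finset.sum_congr rfl e1, Finset.sum_comm]
    calc ∑ z ∈ T, ∑ r ∈ Finset.range (m + 1), (((Amap h z) # r).card : ℝ) / (m.choose r)
        ≤ ∑ _z ∈ T, (1 : ℝ) := Finset.sum_le_sum (fun z _ => lym_Amap h hp z)
      _ = (k : ℝ) := by rw [Finset.sum_const, hk]; simp
  have hns0 : ∀ i, i < m + 1 → 0 ≤ ns i := by
    intro i hi
    simp only [hns]
    rw [dif_pos hi]
    exact Finset.sum_nonneg fun z _ => by positivity
  have hnsb : ∀ i, i < m + 1 → ns i ≤ bs m i := by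
    intro i hi
    simp only [hns, bs]
    rw [dif_pos hi, dif_pos hi]
    have := sum_slices_le h T ((bperm m ⟨i, hi⟩ : Fin (m + 1)) : ℕ)
    calc nfun ((bperm m ⟨i, hi⟩ : Fin (m + 1)) : ℕ)
        = ((∑ z ∈ T, ((Amap h z) # ((bperm m ⟨i, hi⟩ : Fin (m + 1)) : ℕ)).card : ℕ) : ℝ) := by
          rw [hnfun]; push_cast; rfl
      _ ≤ _ := by exact_mod_cast this
  have hlp2 := lp (m + 1) k (bs m) ns (fun i hi => bs_pos hi)
    (fun i j hij _ => bs_anti i j hij) hns0 hnsb (by rw [h2]; exact hfrac)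
  have hL : ∑ z ∈ T, (Nc h z : ℝ) = ∑ i ∈ Finset.range (m + 1), ns i := by
    rw [h1]
    have := sum_slices_eq h T
    calc ∑ z ∈ T, (Nc h z : ℝ) = ((∑ z ∈ T, Nc h z : ℕ) : ℝ) := by push_cast; rfl
      _ = ((∑ r ∈ Finset.range (m + 1), ∑ z ∈ T, ((Amap h z) # r).card : ℕ) : ℝ) := by rw [this]
      _ = ∑ r ∈ Finset.range (m + 1), nfun r := by rw [hnfun]; push_cast; rfl
  have hR : ∑ i ∈ Finset.range (min k (m + 1)), bs m i ≤ ∑ i ∈ Finset.range k, bs m i :=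
    Finset.sum_le_sum_of_subset_of_nonneg
      (Finset.range_subset_range.2 (min_le_left _ _)) (fun i _ _ => bs_nonneg i)
  rw [hL]
  exact le_trans hlp2 hR

lemma key_main (h : Fin m → ℤ) (hp : ∀ i, 0 < h i) :
    (∑ z ∈ SS h, (Nc h z : ℝ) * Real.log (Nc h z)) ≤
      (∑ j ∈ Finset.range (m + 1), (m.choose j : ℝ) * Real.log (m.choose j)) ∧
    ((∑ z ∈ SS h, (Nc h z : ℝ) * Real.log (Nc h z)) =
      (∑ j ∈ Finset.range (m + 1), (m.choose j : ℝ) * Real.log (m.choose j)) →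
      (SS h).card ≤ m + 1) := by
  classical
  set n := (SS h).card with hn
  have hnge : m + 1 ≤ n := card_SS_ge h hp
  set e := (SS h).equivFin with he
  set v : Fin n → ℝ := fun i => (Nc h ((e.symm i : ℤ)) : ℝ) with hv
  set ρ := Tuple.sort (fun i => -(v i)) with hρ
  set aa : ℕ → ℝ := fun i => if hi : i < n then v (ρ ⟨i, hi⟩) else 0 with haa
  have haa_sum : ∀ W : ℝ → ℝ,
      ∑ i ∈ Finset.range n, W (aa i) = ∑ z ∈ SS h, W ((Nc h z : ℝ)) := by
    intro W
    have step1 : ∑ i ∈ Finset.range n, W (aa i)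
        = ∑ i : Fin n, W (v (ρ i)) := by
      rw [← Fin.sum_univ_eq_sum_range (fun i => W (aa i)) n]
      refine Finset.sum_congr rfl fun i _ => ?_
      simp only [haa]
      rw [dif_pos i.isLt]
    rw [step1, Equiv.sum_comp ρ (fun i => W (v i))]
    have step2 : ∑ i : Fin n, W (v i)
        = ∑ x : {z // z ∈ SS h}, W ((Nc h (x : ℤ) : ℝ)) := by
      rw [← Equiv.sum_comp e.symm (fun x : {z // z ∈ SS h} => W ((Nc h (x : ℤ) : ℝ)))]
    rw [step2]
    exact Finset.sum_coe_sort (SS h) (fun z => W ((Nc h z : ℝ)))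
  have ha1 : ∀ i, i < n → 1 ≤ aa i := by
    intro i hi
    simp only [haa]
    rw [dif_pos hi]
    have hmem := (e.symm (ρ ⟨i, hi⟩)).2
    have := Nc_pos hmem
    simp only [hv]
    exact_mod_cast this
  have hamono : ∀ i j, i ≤ j → j < n → aa j ≤ aa i := by
    intro i j hij hj
    have hi : i < n := lt_of_le_of_lt hij hj
    have hmono : Monotone ((fun i => -(v i)) ∘ ρ) := by
      rw [hρ]; exact Tuple.monotone_sort _
    have := hmono (show (⟨i, hi⟩ : Fin n) ≤ ⟨j, hj⟩ from hij)
    simp only [Function.comp_apply, neg_le_neg_iff] at this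
    simp only [haa]
    rw [dif_pos hi, dif_pos hj]
    exact this
  have hpre : ∀ k, k ≤ n → ∑ i ∈ Finset.range k, aa i ≤ ∑ i ∈ Finset.range k, bs m i := by
    intro k hk
    set φ : Fin n → ℤ := fun i => ((e.symm (ρ i)) : ℤ) with hφ
    have hφinj : Function.Injective φ := by
      intro a b hab
      apply ρ.injective
      apply e.symm.injective
      exact Subtype.ext hab
    set T : Finset ℤ := (Finset.univ.filter (fun i : Fin n => (i : ℕ) < k)).image φ with hT
    have hTcard : T.card = k := by
      rw [hT, Finset.card_image_of_injective _ hφinj, fin_filter_card hk]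
    have hsum_img : ∑ z ∈ T, (Nc h z : ℝ) = ∑ i ∈ Finset.range k, aa i := by
      rw [hT, Finset.sum_image (fun a _ b _ hab => hφinj hab)]
      refine fin_filter_sum hk (fun i => (Nc h (φ i) : ℝ)) aa ?_
      intro i hi
      simp only [haa]
      rw [dif_pos hi]
    have htk := topk h hp T
    rw [hTcard, hsum_img] at htk
    exact htk
  have hAtot : ∑ i ∈ Finset.range n, aa i = (2 ^ m : ℝ) := by
    have h1 : ∑ i ∈ Finset.range n, aa i = ∑ z ∈ SS h, ((Nc h z : ℝ)) :=
      haa_sum (fun x => x)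
    have h2 : ∑ z ∈ SS h, ((Nc h z : ℝ)) = ((∑ z ∈ SS h, Nc h z : ℕ) : ℝ) := by
      push_cast; rfl
    rw [h1, h2, sum_Nc h]
    push_cast; rfl
  have hbs_ext : ∀ V : ℕ → ℝ, (∀ i, m + 1 ≤ i → V i = 0) →
      ∑ i ∈ Finset.range n, V i = ∑ i ∈ Finset.range (m + 1), V i := by
    intro V hV
    symm
    refine Finset.sum_subset (Finset.range_subset_range.2 hnge) ?_
    intro x _ hx
    exact hV x (by simpa [Finset.mem_range, not_lt] using hx)
  have hBtot : ∑ i ∈ Finset.range n, bs m i = (2 ^ m : ℝ) := by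
    rw [hbs_ext (bs m) (fun i hi => bs_zero hi)]
    rw [reindex (fun r => ((m.choose r : ℕ) : ℝ)) (bs m)
      (fun i hi => by simp only [bs]; rw [dif_pos hi])]
    have h3 : ∑ r ∈ Finset.range (m + 1), ((m.choose r : ℕ) : ℝ)
        = ((∑ r ∈ Finset.range (m + 1), m.choose r : ℕ) : ℝ) := by push_cast; rfl
    rw [h3, Nat.sum_range_choose]
    push_cast; rfl
  have htot : ∑ i ∈ Finset.range n, aa i = ∑ i ∈ Finset.range n, bs m i := by
    rw [hAtot, hBtot]
  have hb0 : ∀ i, i < n → 0 ≤ bs m i := fun i _ => bs_nonneg i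
  obtain ⟨hle, heqc⟩ := hlp n aa (bs m) ha1 hamono hb0 hpre htot
  have hAf : ∑ i ∈ Finset.range n, aa i * Real.log (aa i)
      = ∑ z ∈ SS h, (Nc h z : ℝ) * Real.log (Nc h z) :=
    haa_sum (fun x => x * Real.log x)
  have hBf : ∑ i ∈ Finset.range n, bs m i * Real.log (bs m i)
      = ∑ j ∈ Finset.range (m + 1), (m.choose j : ℝ) * Real.log (m.choose j) := by
    rw [hbs_ext (fun i => bs m i * Real.log (bs m i)) (fun i hi => by show bs m i * Real.log (bs m i) = 0; rw [bs_zero hi]; simp)]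
    exact reindex (fun r => ((m.choose r : ℕ) : ℝ) * Real.log ((m.choose r : ℕ) : ℝ)) _
      (fun i hi => by simp only [bs]; rw [dif_pos hi])
  constructor
  · rw [← hAf, ← hBf]; exact hle
  · intro hsum
    have hall := heqc (by rw [hAf, hBf]; exact hsum)
    by_contra hcon
    push_neg at hcon
    have h1 := ha1 (m + 1) hcon
    have h2 := hall (m + 1) hcon
    rw [h2, bs_zero (le_refl _)] at h1
    linarith

lemma key_ineq (h : Fin m → ℤ) (hp : ∀ i, 0 < h i) :
    (∑ z ∈ SS h, (Nc h z : ℝ) * Real.log (Nc h z)) ≤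
      ∑ j ∈ Finset.range (m + 1), (m.choose j : ℝ) * Real.log (m.choose j) :=
  (key_main h hp).1

lemma key_eq_card (h : Fin m → ℤ) (hp : ∀ i, 0 < h i)
    (he : (∑ z ∈ SS h, (Nc h z : ℝ) * Real.log (Nc h z)) =
      ∑ j ∈ Finset.range (m + 1), (m.choose j : ℝ) * Real.log (m.choose j)) :
    (SS h).card ≤ m + 1 :=
  (key_main h hp).2 he

end ELO

theorem entropy_littlewood_offord (m : ℕ) (hm : 1 ≤ m)
    (h : Fin m → ℤ) (hh : ∀ i, h i ≠ 0) :
    Hm m ≤ entX h ∧ (entX h = Hm m ↔ ∀ i j, |h i| = |h j|) := by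
  classical
  set h' : Fin m → ℤ := fun i => |h i| with hh'
  have hp : ∀ i, 0 < h' i := fun i => abs_pos.2 (hh i)
  have habs : entX h = entX h' := ELO.entX_abs h
  have hlog2 : (0:ℝ) < Real.log 2 := Real.log_pos (by norm_num)
  -- translate logb sums into log sums
  have logb_eq : ∀ s : Finset ℤ, ∀ g : ℤ → ℕ,
      (∑ z ∈ s, (g z : ℝ) * Real.logb 2 (g z)) =
        (∑ z ∈ s, (g z : ℝ) * Real.log (g z)) / Real.log 2 := by
    intro s g
    rw [Finset.sum_div]
    refine Finset.sum_congr rfl fun z _ => ?_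
    rw [Real.logb, div_eq_mul_inv, div_eq_mul_inv, mul_assoc]
  have logb_eqC :
      (∑ j ∈ Finset.range (m+1), (m.choose j : ℝ) * Real.logb 2 (m.choose j)) =
        (∑ j ∈ Finset.range (m+1), (m.choose j : ℝ) * Real.log (m.choose j)) / Real.log 2 := by
    rw [Finset.sum_div]
    refine Finset.sum_congr rfl fun z _ => ?_
    rw [Real.logb, div_eq_mul_inv, div_eq_mul_inv, mul_assoc]
  have hent : entX h = m -
      ((∑ z ∈ ELO.SS h', (ELO.Nc h' z : ℝ) * Real.log (ELO.Nc h' z)) / Real.log 2) / 2 ^ m := by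
    rw [habs, ELO.entX_eq, logb_eq]
  have hHm : Hm m = m -
      ((∑ j ∈ Finset.range (m+1), (m.choose j : ℝ) * Real.log (m.choose j)) / Real.log 2) / 2 ^ m := by
    rw [ELO.Hm_eq, logb_eqC]
  have hkey := ELO.key_ineq h' hp
  have h2m : (0:ℝ) < 2 ^ m := by positivity
  constructor
  · rw [hent, hHm]
    have : (∑ z ∈ ELO.SS h', (ELO.Nc h' z : ℝ) * Real.log (ELO.Nc h' z)) / Real.log 2 / 2 ^ m ≤
        (∑ j ∈ Finset.range (m+1), (m.choose j : ℝ) * Real.log (m.choose j)) / Real.log 2 / 2 ^ m := by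
      gcongr
    linarith
  · constructor
    · intro heq
      rw [hent, hHm] at heq
      have hsums : (∑ z ∈ ELO.SS h', (ELO.Nc h' z : ℝ) * Real.log (ELO.Nc h' z)) =
          ∑ j ∈ Finset.range (m+1), (m.choose j : ℝ) * Real.log (m.choose j) := by
        have h1 : (∑ z ∈ ELO.SS h', (ELO.Nc h' z : ℝ) * Real.log (ELO.Nc h' z)) / Real.log 2 / 2 ^ m =
            (∑ j ∈ Finset.range (m+1), (m.choose j : ℝ) * Real.log (m.choose j)) / Real.log 2 / 2 ^ m := by
          linarith
        field_simp at h1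
        exact h1
      by_contra hne
      have hne' : ¬ ∀ i j, h' i = h' j := hne
      have := ELO.card_SS_big h' hp hne'
      have := ELO.key_eq_card h' hp hsums
      omega
    · intro hc
      have hcc : ∀ i, h' i = h' ⟨0, hm⟩ := fun i => hc i ⟨0, hm⟩
      have := ELO.const_case h' (h' ⟨0, hm⟩) (hp _) hcc
        (fun n => (n : ℝ) * Real.log n)
      rw [hent, hHm, this]
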